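/- Let λ₁ ≥ 0, σ₁ > 0 and 0 ≤ τ_R ≤ τ_D, and set x₀ = (λ₁/σ₁)·[1 − e^{−(τ_D−τ_R)σ₁}/(2 − e^{−τ_D σ₁})]. Let M₀ be Poisson(x₀) distributed, let A be an e^{−σ₁ τ_D}-thinning of M₀, let N ~ Poisson((λ₁/σ₁)(1 − e^{−τ_D σ₁})) and N′ ~ Poisson((λ₁/σ₁)(1 − e^{−(τ_D−τ_R)σ₁})), with A, N, N′ independent. Then the 1/2-thinning of A + N + N′ is again Poisson(x₀) distributed; i.e. x₀ is the equilibrium parameter of the mRNA number at birth. -/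

import Mathlib

open MeasureTheory ProbabilityTheory

/-- `X` has the Poisson distribution with (real, nonnegative) parameter `r`:
`ℙ[X = n] = e^{-r} r^n / n!` for all `n : ℕ`. -/
def HasPoissonLaw {Ω : Type*} [MeasurableSpace Ω] (μ : Measure Ω) (r : ℝ)
    (X : Ω → ℕ) : Prop :=
  ∀ n : ℕ, μ {ω | X ω = n} = ENNReal.ofReal (Real.exp (-r) * r ^ n / n.factorial)

/-- `Y` is an `r`-thinning of `X`: `Y = ∑_{i < X} B i` for some family `(B i)` of
i.i.d. Bernoulli(`r`) random variables independent of `X`. -/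
def IsThinning {Ω : Type*} [MeasurableSpace Ω] (μ : Measure Ω) (r : ℝ)
    (X Y : Ω → ℕ) : Prop :=
  ∃ B : ℕ → Ω → ℕ, (∀ i, Measurable (B i)) ∧
    (∀ i, μ {ω | B i ω = 1} = ENNReal.ofReal r) ∧
    (∀ i, μ {ω | B i ω = 0} = ENNReal.ofReal (1 - r)) ∧
    iIndepFun (fun i : ℕ => if i = 0 then X else B (i - 1)) μ ∧
    ∀ ω, Y ω = ∑ i ∈ Finset.range (X ω), B i ω

open Finset
lemma conv_count {Ω : Type*} [MeasurableSpace Ω] (μ : Measure Ω) (X Y : Ω → ℕ)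
    (hX : Measurable X) (hY : Measurable Y) (h : IndepFun X Y μ) (n : ℕ) :
    μ {ω | X ω + Y ω = n}
      = ∑ k ∈ range (n + 1), μ {ω | X ω = k} * μ {ω | Y ω = n - k} := by
  have hset : {ω | X ω + Y ω = n}
      = ⋃ k ∈ range (n + 1), ({ω | X ω = k} ∩ {ω | Y ω = n - k}) := by
    ext ω
    simp only [Set.mem_setOf_eq, Set.mem_iUnion, Set.mem_inter_iff, mem_range]
    constructor
    · intro hω; exact ⟨X ω, by omega, rfl, by omega⟩
    · rintro ⟨k, hk, h1, h2⟩; omega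
  rw [hset, measure_biUnion_finset]
  · refine sum_congr rfl fun k _ => ?_
    exact h.measure_inter_preimage_eq_mul {k} {n - k}
      (measurableSet_singleton _) (measurableSet_singleton _)
  · intro i _ j _ hij
    simp only [Function.onFun, Set.disjoint_left]
    rintro ω ⟨h1, -⟩ ⟨h2, -⟩
    exact hij (h1 ▸ h2 ▸ rfl)
  · intro k _
    exact (hX (measurableSet_singleton k)).inter (hY (measurableSet_singleton (n - k)))

lemma poisson_add {Ω : Type*} [MeasurableSpace Ω] (μ : Measure Ω) (X Y : Ω → ℕ) (r s : ℝ)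
    (hr : 0 ≤ r) (hs : 0 ≤ s) (hX : Measurable X) (hY : Measurable Y)
    (hXlaw : HasPoissonLaw μ r X) (hYlaw : HasPoissonLaw μ s Y) (h : IndepFun X Y μ) :
    HasPoissonLaw μ (r + s) (fun ω => X ω + Y ω) := by
  intro n
  rw [conv_count μ X Y hX hY h n]
  have key : ∀ k ∈ range (n + 1),
      μ {ω | X ω = k} * μ {ω | Y ω = n - k}
        = ENNReal.ofReal (Real.exp (-(r + s))
            * (r ^ k * s ^ (n - k) * (n.choose k : ℝ)) / n.factorial) := by
    intro k hk
    have hkn : k ≤ n := by simpa using Nat.lt_succ_iff.mp (mem_range.mp hk)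
    rw [hXlaw k, hYlaw (n - k), ← ENNReal.ofReal_mul (by positivity)]
    congr 1
    have hfact : ((n.choose k : ℝ)) * (k.factorial : ℝ) * ((n - k).factorial : ℝ)
        = (n.factorial : ℝ) := by
      exact_mod_cast congrArg (Nat.cast (R := ℝ)) (Nat.choose_mul_factorial_mul_factorial hkn)
    have h1 : (k.factorial : ℝ) ≠ 0 := Nat.cast_ne_zero.mpr k.factorial_ne_zero
    have h2 : ((n - k).factorial : ℝ) ≠ 0 := Nat.cast_ne_zero.mpr (n - k).factorial_ne_zero
    have h3 : (n.factorial : ℝ) ≠ 0 := Nat.cast_ne_zero.mpr n.factorial_ne_zero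
    rw [neg_add, Real.exp_add]
    field_simp
    linear_combination (-(r ^ k * s ^ (n - k))) * hfact
  rw [sum_congr rfl key, ← ENNReal.ofReal_sum_of_nonneg (fun k _ => by positivity)]
  congr 1
  rw [← sum_div, ← mul_sum, ← add_pow]

lemma poisson_thinning {Ω : Type*} [MeasurableSpace Ω] (μ : Measure Ω) [IsProbabilityMeasure μ]
    (p r : ℝ) (hp0 : 0 ≤ p) (hp1 : p ≤ 1) (hr : 0 ≤ r) (X Y : Ω → ℕ)
    (hX : Measurable X) (hXlaw : HasPoissonLaw μ r X) (hthin : IsThinning μ p X Y) :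
    HasPoissonLaw μ (p * r) Y := by
  obtain ⟨B, hBm, hB1, hB0, hInd, hYeq⟩ := hthin
  set g : ℕ → Ω → ℕ := fun i => if i = 0 then X else B (i - 1) with hg
  have hgm : ∀ i, Measurable (g i) := by
    intro i
    cases i with
    | zero => simpa [hg] using hX
    | succ j => simpa [hg] using hBm j
  set S : ℕ → Ω → ℕ := fun m ω => ∑ i ∈ range m, B i ω with hS
  have hSm : ∀ m, Measurable (S m) := fun m => Finset.measurable_sum _ (fun i _ => hBm i)
  have hinj : Function.Injective (· + 1 : ℕ → ℕ) := fun a b h => Nat.succ_injective h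
  have hSum_eq : ∀ m : ℕ, (∑ j ∈ (range m).image (· + 1), g j) = S m := by
    intro m
    funext ω
    rw [Finset.sum_apply, Finset.sum_image (fun a _ b _ h => hinj h)]
    simp [hg, hS]
  have hIndepXS : ∀ m, IndepFun X (S m) μ := by
    intro m
    have h := hInd.indepFun_finsetSum_of_notMem hgm
      (s := (range m).image (· + 1)) (i := 0) (by simp)
    rw [hSum_eq m] at h
    have hg0 : g 0 = X := by simp [hg]
    rw [hg0] at h
    exact h.symm
  have hIndepSB : ∀ m, IndepFun (S m) (B m) μ := by
    intro m
    have h := hInd.indepFun_finsetSum_of_notMem hgm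
      (s := (range m).image (· + 1)) (i := m + 1) (by simp)
    rw [hSum_eq m] at h
    have hgm1 : g (m + 1) = B m := by simp [hg]
    rwa [hgm1] at h
  have hBtot : ∀ i, μ {ω | B i ω = 0} + μ {ω | B i ω = 1} = 1 := by
    intro i
    rw [hB0 i, hB1 i, ← ENNReal.ofReal_add (by linarith) hp0]
    norm_num
  have hBval : ∀ i j, 2 ≤ j → μ {ω | B i ω = j} = 0 := by
    intro i j hj
    have hd01 : Disjoint {ω | B i ω = 0} {ω | B i ω = 1} := by
      rw [Set.disjoint_left]
      intro ω h1 h2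
      simp only [Set.mem_setOf_eq] at h1 h2
      omega
    have hm1 : MeasurableSet {ω | B i ω = 1} := hBm i (measurableSet_singleton 1)
    have hmj : MeasurableSet {ω | B i ω = j} := hBm i (measurableSet_singleton j)
    have h01 : μ ({ω | B i ω = 0} ∪ {ω | B i ω = 1}) = 1 := by
      rw [measure_union hd01 hm1]; exact hBtot i
    have hd2 : Disjoint ({ω | B i ω = 0} ∪ {ω | B i ω = 1}) {ω | B i ω = j} := by
      rw [Set.disjoint_left]
      intro ω h1 h2
      simp only [Set.mem_union, Set.mem_setOf_eq] at h1 h2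
      omega
    have hle : μ (({ω | B i ω = 0} ∪ {ω | B i ω = 1}) ∪ {ω | B i ω = j}) ≤ 1 :=
      prob_le_one
    rw [measure_union hd2 hmj, h01] at hle
    have := ENNReal.le_of_add_le_add_left (by norm_num : (1 : ENNReal) ≠ ⊤)
      (hle.trans_eq (add_zero 1).symm)
    simpa using this
  have hbin : ∀ a b : ℕ, (0:ℝ) ≤ ((a.choose b : ℕ) : ℝ) * p ^ b * (1 - p) ^ (a - b) :=
    fun a b => mul_nonneg (mul_nonneg (Nat.cast_nonneg _) (pow_nonneg hp0 _))
      (pow_nonneg (by linarith) _)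
  -- binomial law of S m
  have hSlaw : ∀ m n, μ {ω | S m ω = n}
      = ENNReal.ofReal ((m.choose n : ℝ) * p ^ n * (1 - p) ^ (m - n)) := by
    intro m
    induction m with
    | zero =>
      intro n
      cases n with
      | zero => simp [hS]
      | succ n => simp [hS]
    | succ m ih =>
      intro n
      have hrw : {ω | S (m + 1) ω = n} = {ω | S m ω + B m ω = n} := by
        simp only [hS, Finset.sum_range_succ]
      rw [hrw, conv_count μ _ _ (hSm m) (hBm m) (hIndepSB m) n]
      cases n with
      | zero =>
        rw [show (0:ℕ) + 1 = 1 from rfl, Finset.sum_range_one, ih 0, Nat.sub_zero, hB0 m,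
          ← ENNReal.ofReal_mul (mul_nonneg (mul_nonneg (Nat.cast_nonneg _)
            (pow_nonneg hp0 _)) (pow_nonneg (by linarith) _))]
        congr 1
        simp [pow_succ]
      | succ n =>
        rw [Finset.sum_range_succ, Finset.sum_range_succ]
        have hzero : ∑ k ∈ range n, μ {ω | S m ω = k} * μ {ω | B m ω = n + 1 - k} = 0 :=
          Finset.sum_eq_zero fun k hk => by
            rw [hBval m (n + 1 - k) (by have := mem_range.mp hk; omega), mul_zero]
        rw [hzero, zero_add]
        have e1 : n + 1 - n = 1 := by omega
        have e2 : n + 1 - (n + 1) = 0 := by omega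
        rw [e1, e2, ih n, ih (n + 1), hB1 m, hB0 m,
          ← ENNReal.ofReal_mul (hbin _ _), ← ENNReal.ofReal_mul (hbin _ _),
          ← ENNReal.ofReal_add (mul_nonneg (hbin _ _) hp0)
            (mul_nonneg (hbin _ _) (by linarith))]
        congr 1
        rcases Nat.lt_or_ge m (n + 1) with hmn | hmn
        · have hc2 : ((m.choose (n + 1) : ℕ) : ℝ) = 0 := by
            rw [Nat.choose_eq_zero_of_lt hmn]; simp
          rcases Nat.eq_or_lt_of_le (Nat.lt_succ_iff.mp hmn) with he | hlt
          · subst he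
            rw [hc2]
            simp only [Nat.choose_self, Nat.sub_self, Nat.cast_one, pow_zero]
            ring
          · have hc1 : ((m.choose n : ℕ) : ℝ) = 0 := by
              rw [Nat.choose_eq_zero_of_lt hlt]; simp
            have hc3 : (((m + 1).choose (n + 1) : ℕ) : ℝ) = 0 := by
              rw [Nat.choose_eq_zero_of_lt (by omega)]; simp
            rw [hc1, hc2, hc3]
            ring
        · have h4 : m - (n + 1) + 1 = m - n := by omega
          have h5 : m + 1 - (n + 1) = m - n := by omega
          have hp' : (((m + 1).choose (n + 1) : ℕ) : ℝ)
              = ((m.choose n : ℕ) : ℝ) + ((m.choose (n + 1) : ℕ) : ℝ) := by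
            rw [Nat.choose_succ_succ]; push_cast; ring
          rw [h5, hp', ← h4, pow_succ]
          ring
  -- main computation
  intro n
  have hdecomp : {ω | Y ω = n} = ⋃ m, ({ω | X ω = m} ∩ {ω | S m ω = n}) := by
    ext ω
    simp only [Set.mem_setOf_eq, Set.mem_iUnion, Set.mem_inter_iff]
    constructor
    · intro hω
      exact ⟨X ω, rfl, by rw [← hω, hYeq ω]⟩
    · rintro ⟨m, h1, h2⟩
      subst h1
      rw [hYeq ω]
      exact h2
  have hmeasure : μ {ω | Y ω = n} = ∑' m, μ ({ω | X ω = m} ∩ {ω | S m ω = n}) := by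
    rw [hdecomp, measure_iUnion]
    · intro i j hij
      simp only [Function.onFun, Set.disjoint_left]
      rintro ω ⟨h1, -⟩ ⟨h2, -⟩
      exact hij (h1 ▸ h2 ▸ rfl)
    · intro m
      exact (hX (measurableSet_singleton m)).inter (hSm m (measurableSet_singleton n))
  set f : ℕ → ℝ := fun m => (Real.exp (-r) * r ^ m / m.factorial)
      * (((m.choose n : ℕ) : ℝ) * p ^ n * (1 - p) ^ (m - n)) with hf
  have hpois_nonneg : ∀ m : ℕ, (0:ℝ) ≤ Real.exp (-r) * r ^ m / m.factorial := fun m =>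
    div_nonneg (mul_nonneg (Real.exp_pos _).le (pow_nonneg hr m)) (Nat.cast_nonneg _)
  have hfnonneg : ∀ m, 0 ≤ f m := fun m => mul_nonneg (hpois_nonneg m) (hbin m n)
  have hterm : ∀ m, μ ({ω | X ω = m} ∩ {ω | S m ω = n}) = ENNReal.ofReal (f m) := by
    intro m
    have h := (hIndepXS m).measure_inter_preimage_eq_mul {m} {n}
      (measurableSet_singleton _) (measurableSet_singleton _)
    rw [show X ⁻¹' {m} = {ω | X ω = m} from rfl,
      show S m ⁻¹' {n} = {ω | S m ω = n} from rfl] at h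
    rw [h, hXlaw m, hSlaw m n, ← ENNReal.ofReal_mul (hpois_nonneg m)]
  have hfk : ∀ k, f (n + k)
      = (Real.exp (-r) * (p * r) ^ n / n.factorial) * ((r * (1 - p)) ^ k / k.factorial) := by
    intro k
    have h4 : n + k - n = k := by omega
    have hcast : (((n + k).choose n : ℕ) : ℝ) * (n.factorial : ℝ) * (k.factorial : ℝ)
        = ((n + k).factorial : ℝ) := by
      have h := Nat.choose_mul_factorial_mul_factorial (Nat.le_add_right n k)
      rw [h4] at h
      exact_mod_cast congrArg (Nat.cast (R := ℝ)) h
    have h1 : (n.factorial : ℝ) ≠ 0 := Nat.cast_ne_zero.mpr n.factorial_ne_zero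
    have h2 : (k.factorial : ℝ) ≠ 0 := Nat.cast_ne_zero.mpr k.factorial_ne_zero
    have h3 : ((n + k).factorial : ℝ) ≠ 0 := Nat.cast_ne_zero.mpr (n + k).factorial_ne_zero
    simp only [hf, h4, mul_pow]
    field_simp
    linear_combination (r ^ (n + k) * p ^ n * (1 - p) ^ k) * hcast
  have heq : (fun k => f (k + n))
      = fun k => (Real.exp (-r) * (p * r) ^ n / n.factorial)
        * ((r * (1 - p)) ^ k / k.factorial) :=
    funext fun k => by rw [add_comm]; exact hfk k
  have hsummable : Summable f := by
    refine (summable_nat_add_iff n).mp ?_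
    rw [heq]
    exact (Real.summable_pow_div_factorial _).mul_left _
  have htsum : ∑' m, f m = Real.exp (-(p * r)) * (p * r) ^ n / n.factorial := by
    rw [← Summable.sum_add_tsum_nat_add n hsummable,
      Finset.sum_eq_zero (fun m hm => by
        simp [hf, Nat.choose_eq_zero_of_lt (mem_range.mp hm)]), zero_add]
    rw [heq, tsum_mul_left]
    have hexp : ∑' k : ℕ, (r * (1 - p)) ^ k / k.factorial = Real.exp (r * (1 - p)) := by
      rw [Real.exp_eq_exp_ℝ, NormedSpace.exp_eq_tsum_div]
    rw [hexp]
    have hee : Real.exp (-r) * Real.exp (r * (1 - p)) = Real.exp (-(p * r)) := by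
      rw [← Real.exp_add]; congr 1; ring
    have h1 : (n.factorial : ℝ) ≠ 0 := Nat.cast_ne_zero.mpr n.factorial_ne_zero
    field_simp
    have hrp : Real.exp (-(r * p)) = Real.exp (-(p * r)) := by rw [mul_comm]
    linear_combination ((p * r) ^ n) * hee - (r ^ n * p ^ n) * hrp
  rw [hmeasure, tsum_congr hterm, ← ENNReal.ofReal_tsum_of_nonneg hfnonneg hsummable, htsum]

/-- With `x₀ = (λ₁/σ₁)(1 − e^{−(τ_D−τ_R)σ₁}/(2 − e^{−τ_D σ₁}))`, if
`M₀ ~ Poisson(x₀)`, `A` is an `e^{−σ₁ τ_D}`-thinning of `M₀`,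
`N ~ Poisson((λ₁/σ₁)(1 − e^{−τ_D σ₁}))`, `N' ~ Poisson((λ₁/σ₁)(1 − e^{−(τ_D−τ_R)σ₁}))`,
and `A, N, N'` are independent, then any 1/2-thinning of `A + N + N'` is again
Poisson(x₀) distributed: `x₀` is the equilibrium parameter of the mRNA number at birth. -/
theorem equilibrium_mRNA_at_birth_poisson
    {Ω : Type*} [MeasurableSpace Ω] (μ : Measure Ω) [IsProbabilityMeasure μ]
    (lam1 sig1 tauR tauD : ℝ)
    (hlam1 : 0 ≤ lam1) (hsig1 : 0 < sig1) (htauR : 0 ≤ tauR) (htauRD : tauR ≤ tauD)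
    (x0 : ℝ)
    (hx0 : x0 = lam1 / sig1
      * (1 - Real.exp (-(tauD - tauR) * sig1) / (2 - Real.exp (-tauD * sig1))))
    (M0 A N N' : Ω → ℕ)
    (hM0 : Measurable M0) (hA : Measurable A) (hN : Measurable N) (hN' : Measurable N')
    (hM0law : HasPoissonLaw μ x0 M0)
    (hAthin : IsThinning μ (Real.exp (-sig1 * tauD)) M0 A)
    (hNlaw : HasPoissonLaw μ (lam1 / sig1 * (1 - Real.exp (-tauD * sig1))) N)
    (hN'law : HasPoissonLaw μ (lam1 / sig1 * (1 - Real.exp (-(tauD - tauR) * sig1))) N')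
    (hIndep : iIndepFun ![A, N, N'] μ) :
    ∀ T : Ω → ℕ, IsThinning μ (1 / 2) (fun ω => A ω + N ω + N' ω) T →
      HasPoissonLaw μ x0 T := by
  intro T hT
  have htauD : 0 ≤ tauD := le_trans htauR htauRD
  set a : ℝ := Real.exp (-(tauD - tauR) * sig1) with ha
  set b : ℝ := Real.exp (-tauD * sig1) with hb
  have hb0 : 0 < b := Real.exp_pos _
  have hb1 : b ≤ 1 := Real.exp_le_one_iff.mpr (by nlinarith)
  have ha0 : 0 < a := Real.exp_pos _
  have ha1 : a ≤ 1 := Real.exp_le_one_iff.mpr (by nlinarith)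
  have hσ : sig1 ≠ 0 := ne_of_gt hsig1
  have h2b : (2 : ℝ) - b ≠ 0 := by linarith
  have hls : 0 ≤ lam1 / sig1 := div_nonneg hlam1 hsig1.le
  have hx0nonneg : 0 ≤ x0 := by
    rw [hx0]
    apply mul_nonneg hls
    have : a / (2 - b) ≤ 1 := (div_le_one (by linarith)).mpr (by linarith)
    linarith
  have hbeq : Real.exp (-sig1 * tauD) = b := by rw [hb]; ring_nf
  -- A is Poisson(b * x0)
  have hAlaw : HasPoissonLaw μ (b * x0) A := by
    have := poisson_thinning μ (Real.exp (-sig1 * tauD)) x0 (Real.exp_pos _).le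
      (Real.exp_le_one_iff.mpr (by nlinarith)) hx0nonneg M0 A hM0 hM0law hAthin
    rwa [hbeq] at this
  -- independence
  have hmeas3 : ∀ i : Fin 3, Measurable (![A, N, N'] i) := by
    intro i
    fin_cases i <;> simpa using ‹_›
  have hAN : IndepFun A N μ := by
    have := hIndep.indepFun (show (0 : Fin 3) ≠ 1 by decide)
    simpa using this
  have hANN' : IndepFun (fun ω => A ω + N ω) N' μ := by
    have h := hIndep.indepFun_finsetSum_of_notMem hmeas3
      (s := {0, 1}) (i := 2) (by decide)
    have hsum : (∑ j ∈ ({0, 1} : Finset (Fin 3)), ![A, N, N'] j)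
        = fun ω => A ω + N ω := by
      funext ω
      rw [Finset.sum_apply]
      simp [Finset.sum_insert, Finset.sum_singleton]
    rw [hsum] at h
    simpa using h
  have hN1 : 0 ≤ lam1 / sig1 * (1 - b) := mul_nonneg hls (by linarith)
  have hN2 : 0 ≤ lam1 / sig1 * (1 - a) := mul_nonneg hls (by linarith)
  have hANlaw : HasPoissonLaw μ (b * x0 + lam1 / sig1 * (1 - b)) (fun ω => A ω + N ω) :=
    poisson_add μ A N _ _ (mul_nonneg hb0.le hx0nonneg) hN1 hA hN hAlaw hNlaw hAN
  have hZlaw : HasPoissonLaw μ (b * x0 + lam1 / sig1 * (1 - b) + lam1 / sig1 * (1 - a))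
      (fun ω => A ω + N ω + N' ω) :=
    poisson_add μ (fun ω => A ω + N ω) N' _ _
      (by positivity) hN2 (hA.add hN) hN' hANlaw hN'law hANN'
  have hTlaw := poisson_thinning μ (1 / 2)
    (b * x0 + lam1 / sig1 * (1 - b) + lam1 / sig1 * (1 - a))
    (by norm_num) (by norm_num) (by positivity)
    (fun ω => A ω + N ω + N' ω) T ((hA.add hN).add hN') hZlaw hT
  have hkey : 1 / 2 * (b * x0 + lam1 / sig1 * (1 - b) + lam1 / sig1 * (1 - a)) = x0 := by
    rw [hx0]
    field_simp
    ring
  rwa [hkey] at hTlaw
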